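/- Let I be a proper nonzero homogeneous ideal of S such that m^ℓ ⊄ I for every positive integer ℓ. Then for every integer N there exists q = p^e with (n+1)q − M_q(I) > N; that is, the sequence {(n+1)q − M_q(I)} over powers q of p is unbounded above. -/

import Mathlib

/-!
STATEMENT 4: Let `I` be a proper nonzero homogeneous ideal of `S = k[x_0, …, x_n]`
(char `k = p > 0`) such that `m^ℓ ⊄ I` for every positive integer `ℓ`. Then for every
integer `N` there exists `q = p^e` with `(n+1)q − M_q(I) > N`; that is, the sequence
`{(n+1)q − M_q(I)}` over powers `q` of `p` is unbounded above.
-/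

noncomputable section

open MvPolynomial

/-- The homogeneous maximal ideal `m = (x_0, …, x_n)` of `k[x_0, …, x_n]`. -/
def maxIdeal (k : Type) [Field k] (n : ℕ) : Ideal (MvPolynomial (Fin (n + 1)) k) :=
  Ideal.span (Set.range MvPolynomial.X)

/-- The `q`-th bracket (Frobenius) power `I^{[q]}` of an ideal. -/
def brk {R : Type} [CommRing R] (I : Ideal R) (q : ℕ) : Ideal R :=
  Ideal.span ((fun a => a ^ q) '' (I : Set R))

/-- `M_q(I) = max{ℓ ≥ 0 : (m^{[q]} : I) ⊆ m^{[q]} + m^ℓ}`. -/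
def Mq (k : Type) [Field k] (n : ℕ) (I : Ideal (MvPolynomial (Fin (n + 1)) k)) (q : ℕ) : ℕ :=
  sSup {ℓ : ℕ | Submodule.colon (brk (maxIdeal k n) q) I ≤
    brk (maxIdeal k n) q ⊔ (maxIdeal k n) ^ ℓ}

namespace Stmt4Aux

variable {k : Type} [Field k] {n : ℕ}

/-- total degree of an exponent vector -/
def ds {n : ℕ} (c : Fin (n + 1) →₀ ℕ) : ℕ := ∑ i, c i

lemma ds_add (a b : Fin (n + 1) →₀ ℕ) : ds (a + b) = ds a + ds b := by
  simp [ds, Finsupp.add_apply, Finset.sum_add_distrib]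

lemma ds_degree (c : Fin (n + 1) →₀ ℕ) : c.degree = ds c := by
  refine Finset.sum_subset (Finset.subset_univ _) (fun i _ hi => ?_)
  exact Finsupp.notMem_support_iff.mp hi

lemma ds_eq_zero {c : Fin (n + 1) →₀ ℕ} (h : ds c = 0) : c = 0 := by
  ext i
  have := Finset.sum_eq_zero_iff.mp h i (Finset.mem_univ i)
  simpa using this

lemma ds_single (i : Fin (n + 1)) (m : ℕ) : ds (Finsupp.single i m) = m := by
  rw [ds, Finset.sum_eq_single i]
  · simp
  · intro j _ hj; exact Finsupp.single_eq_of_ne' (Ne.symm hj)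
  · intro hi; exact absurd (Finset.mem_univ i) hi

lemma ds_le_of_le {a b : Fin (n + 1) →₀ ℕ} (h : a ≤ b) : ds a ≤ ds b :=
  Finset.sum_le_sum fun i _ => h i

lemma apply_le_ds (c : Fin (n + 1) →₀ ℕ) (i : Fin (n + 1)) : c i ≤ ds c :=
  Finset.single_le_sum (fun j _ => Nat.zero_le (c j)) (Finset.mem_univ i)

lemma coeff_zero_of_mem_maxIdeal {r : MvPolynomial (Fin (n + 1)) k}
    (hr : r ∈ maxIdeal k n) : coeff 0 r = 0 := by
  have : maxIdeal k n ≤ RingHom.ker (constantCoeff (R := k) (σ := Fin (n + 1))) := by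
    rw [maxIdeal, Ideal.span_le]
    rintro _ ⟨i, rfl⟩
    simp [RingHom.mem_ker]
  have h0 := this hr
  rw [RingHom.mem_ker] at h0
  rw [← constantCoeff_eq]
  exact h0

lemma coeff_pow_maxIdeal : ∀ (ℓ : ℕ) (P : MvPolynomial (Fin (n + 1)) k),
    P ∈ (maxIdeal k n) ^ ℓ → ∀ c, ds c < ℓ → coeff c P = 0 := by
  intro ℓ
  induction ℓ with
  | zero => intro P _ c hc; omega
  | succ ℓ ih =>
    intro P hP c hc
    rw [pow_succ] at hP
    revert c
    refine Submodule.mul_induction_on hP ?_ ?_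
    · intro s hs r hr c hc
      rw [coeff_mul]
      refine Finset.sum_eq_zero fun uv huv => ?_
      rw [Finset.HasAntidiagonal.mem_antidiagonal] at huv
      by_cases hu : ds uv.1 < ℓ
      · rw [ih s hs uv.1 hu, zero_mul]
      · have hds : ds uv.1 + ds uv.2 = ds c := by rw [← ds_add, huv]
        have hv : ds uv.2 = 0 := by omega
        rw [ds_eq_zero hv, coeff_zero_of_mem_maxIdeal hr, mul_zero]
    · intro x y hx hy c hc
      rw [coeff_add, hx c hc, hy c hc, add_zero]

/-- the ideal `(x_0^q, …, x_n^q)` -/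
def Jq (k : Type) [Field k] (n q : ℕ) : Ideal (MvPolynomial (Fin (n + 1)) k) :=
  Ideal.span (Set.range fun i : Fin (n + 1) => (X i : MvPolynomial (Fin (n + 1)) k) ^ q)

lemma coeff_eq_zero_of_mem_Jq {q : ℕ} {P : MvPolynomial (Fin (n + 1)) k}
    (hP : P ∈ Jq k n q) {c : Fin (n + 1) →₀ ℕ} (hc : ∀ i, c i < q) : coeff c P = 0 := by
  induction hP using Submodule.span_induction generalizing c with
  | mem x hx =>
    obtain ⟨i, rfl⟩ := hx
    show coeff c ((X i : MvPolynomial (Fin (n+1)) k) ^ q) = 0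
    rw [X_pow_eq_monomial, coeff_monomial, if_neg]
    intro hE
    have := hc i
    rw [← hE] at this
    simp at this
  | zero => simp
  | add x y hx hy ihx ihy => rw [coeff_add, ihx hc, ihy hc, add_zero]
  | smul a x hx ihx =>
    rw [smul_eq_mul, coeff_mul]
    refine Finset.sum_eq_zero fun uv huv => ?_
    rw [Finset.HasAntidiagonal.mem_antidiagonal] at huv
    have : ∀ i, uv.2 i < q := by
      intro i
      have : uv.2 i ≤ c i := by
        rw [← huv]; simp
      exact lt_of_le_of_lt this (hc i)
    rw [ihx this, mul_zero]

lemma mem_Jq {q : ℕ} {P : MvPolynomial (Fin (n + 1)) k}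
    (h : ∀ c : Fin (n + 1) →₀ ℕ, (∀ i, c i < q) → coeff c P = 0) : P ∈ Jq k n q := by
  rw [← support_sum_monomial_coeff P]
  refine Ideal.sum_mem _ fun c hcs => ?_
  have hc0 : coeff c P ≠ 0 := mem_support_iff.mp hcs
  have : ¬ (∀ i, c i < q) := fun hall => hc0 (h c hall)
  push_neg at this
  obtain ⟨i, hi⟩ := this
  have hle : Finsupp.single i q ≤ c := Finsupp.single_le_iff.mpr hi
  have : monomial c (coeff c P) =
      (X i : MvPolynomial (Fin (n + 1)) k) ^ q * monomial (c - Finsupp.single i q) (coeff c P) := by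
    rw [X_pow_eq_monomial, monomial_mul, one_mul, add_tsub_cancel_of_le hle]
  rw [this]
  exact Ideal.mul_mem_right _ _ (Ideal.subset_span ⟨i, rfl⟩)

lemma brk_eq_Jq (p : ℕ) [Fact p.Prime] [CharP k p] (e : ℕ) :
    brk (maxIdeal k n) (p ^ e) = Jq k n (p ^ e) := by
  apply le_antisymm
  · rw [brk, Ideal.span_le]
    rintro _ ⟨a, ha, rfl⟩
    simp only [SetLike.mem_coe]
    have hmem : a ∈ Ideal.span (Set.range (X : Fin (n+1) → MvPolynomial (Fin (n+1)) k)) := ha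
    clear ha
    induction hmem using Submodule.span_induction with
    | mem x hx =>
      obtain ⟨i, rfl⟩ := hx
      exact Ideal.subset_span ⟨i, rfl⟩
    | zero =>
      rw [zero_pow (pow_ne_zero e (Fact.out (p := p.Prime)).ne_zero)]
      exact Ideal.zero_mem _
    | add x y hx hy ihx ihy =>
      rw [add_pow_char_pow]
      exact Ideal.add_mem _ ihx ihy
    | smul a x hx ihx =>
      rw [smul_eq_mul, mul_pow]
      exact Ideal.mul_mem_left _ _ ihx
  · rw [Jq, Ideal.span_le]
    rintro _ ⟨i, rfl⟩
    refine Ideal.subset_span ⟨X i, ?_, rfl⟩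
    exact Ideal.subset_span ⟨i, rfl⟩

lemma exists_trunc : ∀ (ℓ : ℕ) (c : Fin (n + 1) →₀ ℕ), ℓ ≤ ds c →
    ∃ b : Fin (n + 1) →₀ ℕ, b ≤ c ∧ ds b = ℓ := by
  intro ℓ
  induction ℓ with
  | zero => intro c _; exact ⟨0, zero_le, by simp [ds]⟩
  | succ ℓ ih =>
    intro c hc
    obtain ⟨b, hbc, hbd⟩ := ih c (by omega)
    have : ∃ i, b i < c i := by
      by_contra hno
      push_neg at hno
      have : b = c := le_antisymm hbc (Finsupp.le_def.mpr hno)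
      subst this
      omega
    obtain ⟨i, hi⟩ := this
    refine ⟨b + Finsupp.single i 1, ?_, by rw [ds_add, hbd, ds_single]⟩
    intro j
    rcases eq_or_ne j i with rfl | hne
    · simpa [Finsupp.add_apply] using hi
    · simpa [Finsupp.add_apply, Finsupp.single_eq_of_ne' (Ne.symm hne)] using hbc j

lemma pow_le_of_monomials {I : Ideal (MvPolynomial (Fin (n + 1)) k)} {ℓ : ℕ}
    (hmono : ∀ b : Fin (n + 1) →₀ ℕ, ds b = ℓ → monomial b (1 : k) ∈ I) :
    (maxIdeal k n) ^ ℓ ≤ I := by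
  intro P hP
  rw [← support_sum_monomial_coeff P]
  refine Ideal.sum_mem _ fun c hcs => ?_
  have hc0 : coeff c P ≠ 0 := mem_support_iff.mp hcs
  have hds : ℓ ≤ ds c := by
    by_contra hlt
    exact hc0 (coeff_pow_maxIdeal ℓ P hP c (by omega))
  obtain ⟨b, hbc, hbd⟩ := exists_trunc ℓ c hds
  have : monomial c (coeff c P) = monomial b (1 : k) * monomial (c - b) (coeff c P) := by
    rw [monomial_mul, one_mul, add_tsub_cancel_of_le hbc]
  rw [this]
  exact Ideal.mul_mem_right _ _ (hmono b hbd)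

end Stmt4Aux

namespace Stmt4Aux

lemma Mq_le (k : Type) [Field k] (p : ℕ) [Fact p.Prime] [CharP k p] (n : ℕ)
    (I : Ideal (MvPolynomial (Fin (n + 1)) k))
    (hhom : ∀ g ∈ I, ∀ i : ℕ, MvPolynomial.homogeneousComponent i g ∈ I)
    (h : ∀ ℓ : ℕ, 0 < ℓ → ¬ (maxIdeal k n) ^ ℓ ≤ I) (e : ℕ) (he : 1 ≤ e) :
    Mq k n I (p ^ e) ≤ n * (p ^ e - 1) := by
  classical
  set q := p ^ e with hqdef
  have hp2 : 2 ≤ p := (Fact.out (p := p.Prime)).two_le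
  have hq2 : 2 ≤ q := le_trans hp2 (Nat.le_self_pow (by omega) p)
  set t : Fin (n + 1) →₀ ℕ := Finsupp.equivFunOnFinite.symm (fun _ => q - 1) with ht
  have htapp : ∀ i, t i = q - 1 := fun i => rfl
  have hds_t : ds t = (n + 1) * (q - 1) := by
    simp only [ds, htapp, Finset.sum_const, Finset.card_univ, Fintype.card_fin, smul_eq_mul]
  set B : Finset (Fin (n + 1) →₀ ℕ) := (Finset.Iic t).filter (fun b => ds b = q - 1) with hB
  have hmemB : ∀ b, b ∈ B ↔ ds b = q - 1 := by
    intro b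
    rw [hB, Finset.mem_filter, Finset.mem_Iic]
    constructor
    · exact fun hb => hb.2
    · intro hb
      refine ⟨fun i => ?_, hb⟩
      rw [htapp i, ← hb]
      exact apply_le_ds b i
  have hb_le_t : ∀ b : Fin (n + 1) →₀ ℕ, b ∈ B → b ≤ t := by
    intro b hb i
    rw [htapp i, ← (hmemB b).mp hb]
    exact apply_le_ds b i
  -- the coefficient-extraction linear map
  set L : MvPolynomial (Fin (n + 1)) k →ₗ[k] (↥B → k) :=
    LinearMap.pi (fun b : ↥B => MvPolynomial.lcoeff k b.1) with hL
  have hLapp : ∀ f b, L f b = coeff b.1 f := fun f b => rfl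
  set V : Submodule k (↥B → k) := Submodule.map L (Submodule.restrictScalars k I) with hV
  -- V is a proper subspace
  have hVtop : V ≠ ⊤ := by
    intro hVt
    refine h (q - 1) (by omega) (pow_le_of_monomials ?_)
    intro b hb
    have hbB : b ∈ B := (hmemB b).mpr hb
    have hmem : (Pi.single (⟨b, hbB⟩ : ↥B) (1 : k)) ∈ V := by
      rw [hVt]; trivial
    obtain ⟨f, hfI, hfL⟩ := hmem
    have hf' := hhom f hfI (q - 1)
    have heq : homogeneousComponent (q - 1) f = monomial b (1 : k) := by
      apply MvPolynomial.ext
      intro d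
      rw [coeff_homogeneousComponent, coeff_monomial, ds_degree]
      by_cases hd : ds d = q - 1
      · rw [if_pos hd]
        have hdB : d ∈ B := (hmemB d).mpr hd
        have hcd := congrFun hfL ⟨d, hdB⟩
        rw [hLapp] at hcd
        rw [hcd]
        by_cases hbd : b = d
        · subst hbd
          rw [if_pos rfl, Pi.single_eq_same]
        · rw [if_neg hbd, Pi.single_eq_of_ne]
          intro hc
          exact hbd (congrArg Subtype.val hc).symm
      · rw [if_neg hd, if_neg (fun hbd => hd (by rw [← hbd]; exact hb))]
    rw [← heq]
    exact hf'
  -- pick a functional vanishing on V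
  obtain ⟨ψ, hψ0, hψbot⟩ := Submodule.exists_dual_map_eq_bot_of_lt_top
    (lt_top_iff_ne_top.mpr hVtop) inferInstance
  set c : ↥B → k := fun b => ψ (fun j => if b = j then 1 else 0) with hc
  have hψsum : ∀ v : ↥B → k, ψ v = ∑ b : ↥B, v b * c b := by
    intro v
    rw [LinearMap.pi_apply_eq_sum_univ ψ v]
    exact Finset.sum_congr rfl fun b _ => by rw [smul_eq_mul, hc]
  have hker : ∀ f ∈ I, ∑ b : ↥B, c b * coeff b.1 f = 0 := by
    intro f hf
    have hmem : L f ∈ V := ⟨f, hf, rfl⟩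
    have h0 : ψ (L f) = 0 := by
      have : ψ (L f) ∈ Submodule.map ψ V := Submodule.mem_map_of_mem hmem
      rw [hψbot] at this
      exact (Submodule.mem_bot k).mp this
    rw [hψsum] at h0
    rw [← h0]
    exact Finset.sum_congr rfl fun b _ => by rw [hLapp, mul_comm]
  -- a nonzero coefficient vector
  have hcex : ∃ b₀ : ↥B, c b₀ ≠ 0 := by
    by_contra hno
    push_neg at hno
    apply hψ0
    apply LinearMap.ext
    intro v
    rw [hψsum]
    simp [hno]
  obtain ⟨b₀, hc0⟩ := hcex
  -- the witness polynomial
  set g : MvPolynomial (Fin (n + 1)) k := ∑ b : ↥B, monomial (t - b.1) (c b) with hg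
  have hsub_cancel : ∀ b : Fin (n + 1) →₀ ℕ, b ∈ B → t - (t - b) = b := by
    intro b hb
    exact tsub_tsub_cancel_of_le (hb_le_t b hb)
  have hcoeff_g : coeff (t - b₀.1) g = c b₀ := by
    rw [hg, coeff_sum, Finset.sum_eq_single b₀]
    · rw [coeff_monomial, if_pos rfl]
    · intro b _ hbne
      rw [coeff_monomial, if_neg]
      intro hE
      apply hbne
      have : (b : Fin (n + 1) →₀ ℕ) = b₀.1 := by
        rw [← hsub_cancel b.1 b.2, hE, hsub_cancel b₀.1 b₀.2]
      exact Subtype.ext this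
    · intro hb; exact absurd (Finset.mem_univ b₀) hb
  -- top-coefficient pairing
  have hpair : ∀ f : MvPolynomial (Fin (n + 1)) k,
      coeff t (g * f) = ∑ b : ↥B, c b * coeff b.1 f := by
    intro f
    rw [hg, Finset.sum_mul, coeff_sum]
    refine Finset.sum_congr rfl fun b _ => ?_
    rw [coeff_monomial_mul', if_pos tsub_le_self, hsub_cancel b.1 b.2]
  -- g lies in the colon ideal
  have hgcolon : g ∈ Submodule.colon (brk (maxIdeal k n) q) I := by
    rw [Submodule.mem_colon]
    intro f hfI
    rw [smul_eq_mul, hqdef, brk_eq_Jq p e]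
    apply mem_Jq
    intro a ha
    have hat : a ≤ t := by
      intro i
      rw [htapp i]
      have := ha i
      omega
    have hstep : coeff a (g * f) = coeff t (g * (monomial (t - a) (1 : k) * f)) := by
      have : g * (monomial (t - a) (1 : k) * f) = monomial (t - a) (1 : k) * (g * f) := by
        ring
      rw [this, coeff_monomial_mul', if_pos tsub_le_self, one_mul,
        tsub_tsub_cancel_of_le hat]
    rw [hstep, hpair]
    exact hker _ (Ideal.mul_mem_left _ _ hfI)
  -- g is not in Jq ⊔ m^(D+1)
  set D : ℕ := n * (q - 1) with hD
  have hds_sub : ds (t - b₀.1) = D := by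
    have h1 : ds (t - b₀.1) + ds b₀.1 = ds t := by
      rw [ds, ds, ds, ← Finset.sum_add_distrib]
      refine Finset.sum_congr rfl fun i _ => ?_
      rw [Finsupp.tsub_apply]
      have := hb_le_t b₀.1 b₀.2 i
      omega
    have h2 : ds b₀.1 = q - 1 := (hmemB b₀.1).mp b₀.2
    rw [hds_t, h2] at h1
    have : (n + 1) * (q - 1) = n * (q - 1) + (q - 1) := by ring
    omega
  have hgnot : g ∉ Jq k n q ⊔ (maxIdeal k n) ^ (D + 1) := by
    intro hmem
    obtain ⟨u, hu, v, hv, huv⟩ := Submodule.mem_sup.mp hmem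
    have h1 : coeff (t - b₀.1) u = 0 := by
      refine coeff_eq_zero_of_mem_Jq hu fun i => ?_
      rw [Finsupp.tsub_apply, htapp i]
      omega
    have h2 : coeff (t - b₀.1) v = 0 :=
      coeff_pow_maxIdeal (D + 1) v hv _ (by rw [hds_sub]; omega)
    have : coeff (t - b₀.1) g = 0 := by
      rw [← huv, coeff_add, h1, h2, add_zero]
    rw [hcoeff_g] at this
    exact hc0 this
  -- conclude
  have hub : ∀ ℓ ∈ {ℓ : ℕ | Submodule.colon (brk (maxIdeal k n) q) I ≤
      brk (maxIdeal k n) q ⊔ (maxIdeal k n) ^ ℓ}, ℓ ≤ D := by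
    intro ℓ hℓ
    by_contra hgt
    push_neg at hgt
    apply hgnot
    have hle : brk (maxIdeal k n) q ⊔ (maxIdeal k n) ^ ℓ ≤
        Jq k n q ⊔ (maxIdeal k n) ^ (D + 1) := by
      apply sup_le_sup
      · rw [hqdef, brk_eq_Jq p e]
      · exact Ideal.pow_le_pow_right (by omega)
    exact hle (hℓ hgcolon)
  have h0mem : (0 : ℕ) ∈ {ℓ : ℕ | Submodule.colon (brk (maxIdeal k n) q) I ≤
      brk (maxIdeal k n) q ⊔ (maxIdeal k n) ^ ℓ} := by
    simp only [Set.mem_setOf_eq, pow_zero, Ideal.one_eq_top, sup_top_eq]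
    exact le_top
  calc Mq k n I q = sSup _ := rfl
    _ ≤ D := csSup_le ⟨0, h0mem⟩ hub


end Stmt4Aux

theorem stmt4 (k : Type) [Field k] (p : ℕ) [Fact p.Prime] [CharP k p] (n : ℕ)
    (I : Ideal (MvPolynomial (Fin (n + 1)) k)) (hI : I ≠ ⊤) (hI0 : I ≠ ⊥)
    (hhom : ∀ g ∈ I, ∀ i : ℕ, MvPolynomial.homogeneousComponent i g ∈ I)
    (h : ∀ ℓ : ℕ, 0 < ℓ → ¬ (maxIdeal k n) ^ ℓ ≤ I) :
    ∀ N : ℤ, ∃ e : ℕ,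
      ((n : ℤ) + 1) * (p : ℤ) ^ e - (Mq k n I (p ^ e) : ℤ) > N := by
  intro N
  refine ⟨N.toNat + 1, ?_⟩
  set e := N.toNat + 1 with he
  have hM : Mq k n I (p ^ e) ≤ n * (p ^ e - 1) :=
    Stmt4Aux.Mq_le k p n I hhom h e (by omega)
  have hp2 : 2 ≤ p := (Fact.out (p := p.Prime)).two_le
  have hq1 : 1 ≤ p ^ e := Nat.one_le_pow _ _ (by omega)
  have hqN : N.toNat < p ^ e := by
    calc N.toNat < 2 ^ e := by
          calc N.toNat < 2 ^ N.toNat := Nat.lt_two_pow_self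
            _ ≤ 2 ^ e := Nat.pow_le_pow_right (by omega) (by omega)
      _ ≤ p ^ e := Nat.pow_le_pow_left hp2 e
  have hNle : (N : ℤ) ≤ (N.toNat : ℤ) := Int.self_le_toNat N
  have hMZ : (Mq k n I (p ^ e) : ℤ) ≤ (n : ℤ) * ((p : ℤ) ^ e - 1) := by
    calc (Mq k n I (p ^ e) : ℤ) ≤ ((n * (p ^ e - 1) : ℕ) : ℤ) := by exact_mod_cast hM
      _ = (n : ℤ) * ((p : ℤ) ^ e - 1) := by
        push_cast [Nat.cast_sub hq1]
        ring
  have hqNZ : (N.toNat : ℤ) < (p : ℤ) ^ e := by exact_mod_cast hqN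
  nlinarith [hMZ, hqNZ, hNle]
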